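/- arXiv:1508.01663 — 2 statements merged into one kernel-verified Lean document; each statement's English description precedes it below -/
import Mathlib

section
/- With Φ as above, for any partition λ = (λ_1,...,λ_d) and any symmetric Laurent polynomial f, Φ(∏_{i=0}^{d-1} t_i^{-i} · f · s_λ(t)) = Φ(∏_{i=0}^{d-1} t_i^{-i + λ_{i+1}} · f), where s_λ(t) is the Schur polynomial in t_0,...,t_{d-1} associated to λ. -/
open Finset

/-- `1/m!` for an integer `m`, with the convention `1/m! = 0` for `m < 0`. -/
noncomputable def invFact (m : ℤ) : ℚ := if 0 ≤ m then ((Nat.factorial m.toNat : ℕ) : ℚ)⁻¹ else 0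

/-- The constant term of `Δ(t) · exp(∑_i 1/t_i) · ∏_i t_i^{m_i}`, where
`Δ(t) = ∏_{i<j}(t_i - t_j) = ∑_σ sgn(σ) ∏_i t_i^{d-1-σ(i)}`:  expanding the exponential
series, the constant term equals `∑_σ sgn(σ) ∏_i 1/(m_i + d - 1 - σ(i))!`. -/
noncomputable def phiC (d : ℕ) (m : Fin d → ℤ) : ℚ :=
  ∑ σ : Equiv.Perm (Fin d),
    ((Equiv.Perm.sign σ : ℤ) : ℚ) * ∏ i : Fin d, invFact (m i + (d : ℤ) - 1 - ((σ i : ℕ) : ℤ))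

/-- The linear form `Φ` on the Laurent polynomial ring `A[t_0^{±1}, …, t_{d-1}^{±1}]`
(realized as `AddMonoidAlgebra A (Fin d → ℤ)`), given by
`Φ(f) = const_t(Δ(t) · exp(∑_i 1/t_i) · f(t))`; by linearity it is determined by its
values `phiC d m` on the monomials `t^m`. -/
noncomputable def Phi (A : Type*) [CommRing A] [Algebra ℚ A] (d : ℕ)
    (f : AddMonoidAlgebra A (Fin d → ℤ)) : A :=
  f.coeff.sum fun m a => phiC d m • a

/-- The action of a permutation `σ` on Laurent polynomials, with `σ(t_i) = t_{σ(i)}`. -/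
noncomputable def permL {A : Type*} [CommRing A] {d : ℕ} (σ : Equiv.Perm (Fin d))
    (f : AddMonoidAlgebra A (Fin d → ℤ)) : AddMonoidAlgebra A (Fin d → ℤ) :=
  AddMonoidAlgebra.ofCoeff (Finsupp.mapDomain (fun m : Fin d → ℤ => m ∘ σ.symm) f.coeff)

/-- The Laurent monomial `t^m = ∏_i t_i^{m_i}` with coefficient `a`. -/
noncomputable def monoL (A : Type*) [CommRing A] {d : ℕ} (m : Fin d → ℤ) (a : A) :
    AddMonoidAlgebra A (Fin d → ℤ) := AddMonoidAlgebra.single m a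

/-- The Vandermonde Laurent polynomial `Δ(t) = ∏_{0 ≤ i < j ≤ d-1}(t_i - t_j)`. -/
noncomputable def vandL (A : Type*) [CommRing A] (d : ℕ) : AddMonoidAlgebra A (Fin d → ℤ) :=
  ∏ p ∈ Finset.univ.filter (fun p : Fin d × Fin d => p.1 < p.2),
    (monoL A (fun u => if u = p.1 then 1 else 0) 1 - monoL A (fun u => if u = p.2 then 1 else 0) 1)

/-- The alternant `det[t_j^{λ_i + d - i}]_{1 ≤ i ≤ d, 0 ≤ j ≤ d-1}` (here written with
`0`-based rows: row `i` has exponents `λ_{i+1} + d - 1 - i`). -/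
noncomputable def alternantL (A : Type*) [CommRing A] (d : ℕ) (l : Fin d → ℕ) :
    AddMonoidAlgebra A (Fin d → ℤ) :=
  Matrix.det (Matrix.of fun i j : Fin d =>
    monoL A (fun u => if u = j then (l i : ℤ) + (d : ℤ) - 1 - (i : ℕ) else 0) (1 : A))

section Aux

noncomputable def Lmap (A : Type*) [CommRing A] [Algebra ℚ A] (d : ℕ) :
    AddMonoidAlgebra A (Fin d → ℤ) →ₗ[ℤ] A :=
  (Finsupp.lsum ℤ fun m : Fin d → ℤ => (∏ i, invFact (m i)) • (LinearMap.id : A →ₗ[ℤ] A)) ∘ₗ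
    (AddMonoidAlgebra.coeffLinearEquiv ℤ).toLinearMap

variable {A : Type*} [CommRing A] [Algebra ℚ A] {d : ℕ}

lemma Lmap_single (m : Fin d → ℤ) (a : A) :
    Lmap A d (AddMonoidAlgebra.single m a) = (∏ i, invFact (m i)) • a := by
  rw [Lmap, LinearMap.comp_apply]
  erw [Finsupp.lsum_single]
  rfl

omit [Algebra ℚ A] in
lemma permL_single (σ : Equiv.Perm (Fin d)) (m : Fin d → ℤ) (a : A) :
    permL σ (AddMonoidAlgebra.single m a) = AddMonoidAlgebra.single (m ∘ σ.symm) a :=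
  AddMonoidAlgebra.mapDomain_single

omit [Algebra ℚ A] in
lemma permL_mul (σ : Equiv.Perm (Fin d)) (g h : AddMonoidAlgebra A (Fin d → ℤ)) :
    permL σ (g * h) = permL σ g * permL σ h :=
  AddMonoidAlgebra.mapDomain_mul
    (AddMonoidHom.mk' (fun m : Fin d → ℤ => m ∘ σ.symm) fun _ _ => rfl) g h

lemma Lmap_permL (σ : Equiv.Perm (Fin d)) (g : AddMonoidAlgebra A (Fin d → ℤ)) :
    Lmap A d (permL σ g) = Lmap A d g := by
  induction g using AddMonoidAlgebra.induction_linear with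
  | zero => simp [permL]
  | add f g hf hg =>
      rw [show permL σ (f + g) = permL σ f + permL σ g from
        AddMonoidAlgebra.mapDomain_add _ _ _, map_add, map_add, hf, hg]
  | single m a =>
      rw [permL_single, Lmap_single, Lmap_single]
      congr 1
      exact Equiv.prod_comp σ.symm fun i => invFact (m i)

omit [Algebra ℚ A] in
lemma units_zsmul (u : ℤˣ) (x : AddMonoidAlgebra A (Fin d → ℤ)) : u • x = (u : ℤ) • x := rfl

omit [Algebra ℚ A] in
lemma vandL_eq : vandL A d = ∑ σ : Equiv.Perm (Fin d),
    (Equiv.Perm.sign σ : ℤ) • AddMonoidAlgebra.single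
      (fun u : Fin d => (d : ℤ) - 1 - ((σ u : ℕ) : ℤ)) (1 : A) := by
  classical
  have hrr : Fin.revPerm * Fin.revPerm = (1 : Equiv.Perm (Fin d)) := by
    ext x
    simp [Fin.rev_rev]
  set v : Fin d → AddMonoidAlgebra A (Fin d → ℤ) :=
    fun k => AddMonoidAlgebra.single (fun u : Fin d => if u = k.rev then (1 : ℤ) else 0) (1 : A)
      with hv
  have h1 : vandL A d = (Matrix.vandermonde v).det := by
    rw [Matrix.det_vandermonde, Finset.prod_sigma' univ (fun i => Ioi i)
      (fun i j => v j - v i)]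
    symm
    unfold vandL
    refine Finset.prod_nbij' (fun x : (_ : Fin d) × Fin d => (x.2.rev, x.1.rev))
      (fun p : Fin d × Fin d => (⟨p.2.rev, p.1.rev⟩ : (_ : Fin d) × Fin d))
      ?_ ?_ ?_ ?_ ?_
    · intro x hx
      simp only [Finset.mem_sigma, Finset.mem_Ioi, Finset.mem_filter, Finset.mem_univ,
        true_and] at hx ⊢
      exact Fin.rev_lt_rev.mpr hx
    · intro p hp
      simp only [Finset.mem_sigma, Finset.mem_Ioi, Finset.mem_filter, Finset.mem_univ,
        true_and] at hp ⊢
      exact Fin.rev_lt_rev.mpr hp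
    · intro x _
      simp [Fin.rev_rev]
    · intro p _
      simp [Fin.rev_rev]
    · intro x _
      simp only [hv, monoL, Fin.rev_rev]
  rw [h1, Matrix.det_apply]
  have hbij : Function.Bijective
      (fun τ : Equiv.Perm (Fin d) => Fin.revPerm * τ⁻¹ * Fin.revPerm) := by
    have : Function.Involutive
        (fun τ : Equiv.Perm (Fin d) => Fin.revPerm * τ⁻¹ * Fin.revPerm) := by
      intro τ
      simp only [mul_inv_rev, inv_inv]
      have hinv : (Fin.revPerm : Equiv.Perm (Fin d))⁻¹ = Fin.revPerm := rfl
      rw [hinv]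
      simp only [← mul_assoc]
      rw [hrr, one_mul, mul_assoc, hrr, mul_one]
    exact this.bijective
  symm
  refine Fintype.sum_bijective _ hbij _ _ fun τ => ?_
  have hsign : Equiv.Perm.sign (Fin.revPerm * τ⁻¹ * Fin.revPerm) = Equiv.Perm.sign τ := by
    rw [map_mul, map_mul, Equiv.Perm.sign_inv]
    have h2 : ∀ s t : ℤˣ, s * t * s = t := fun s t => by
      rw [mul_comm s t, mul_assoc, Int.units_mul_self, mul_one]
    exact h2 _ _
  have happ : ∀ i : Fin d,
      ((Fin.revPerm * τ⁻¹ * Fin.revPerm : Equiv.Perm (Fin d)) i) = (τ⁻¹ i.rev).rev := by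
    intro i
    simp [Equiv.Perm.mul_apply]
  have entry : ∀ i : Fin d,
      Matrix.vandermonde v ((Fin.revPerm * τ⁻¹ * Fin.revPerm : Equiv.Perm (Fin d)) i) i =
        AddMonoidAlgebra.single
          (fun u : Fin d => if u = τ⁻¹ i.rev then ((i : ℕ) : ℤ) else 0) (1 : A) := by
    intro i
    rw [Matrix.vandermonde_apply, happ i, hv]
    dsimp only
    rw [AddMonoidAlgebra.single_pow, one_pow, Fin.rev_rev]
    congr 1
    funext u
    simp only [Pi.smul_apply, smul_eq_mul]
    split <;> simp
  have hprod : ∏ i : Fin d,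
      Matrix.vandermonde v ((Fin.revPerm * τ⁻¹ * Fin.revPerm : Equiv.Perm (Fin d)) i) i =
      AddMonoidAlgebra.single (fun u : Fin d => (d : ℤ) - 1 - ((τ u : ℕ) : ℤ)) (1 : A) := by
    rw [Finset.prod_congr rfl fun i _ => entry i, AddMonoidAlgebra.prod_single,
      Finset.prod_const_one]
    congr 1
    funext u
    rw [Finset.sum_apply]
    rw [Finset.sum_eq_single ((τ u).rev)]
    · simp only [Fin.rev_rev, Equiv.Perm.inv_def, Equiv.symm_apply_apply, if_pos rfl]
      have h3 : ((τ u : Fin d) : ℕ) < d := (τ u).is_lt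
      have h4 : ((τ u).rev : ℕ) = d - ((τ u : ℕ) + 1) := Fin.val_rev _
      rw [h4]
      simp only [if_true]
      omega
    · intro b _ hb
      have : ¬ (u = τ⁻¹ b.rev) := by
        intro h
        apply hb
        rw [h] at *
        have : b.rev = τ (τ⁻¹ b.rev) := (τ.apply_symm_apply b.rev).symm
        rw [← this, Fin.rev_rev]  -- b = (τ (τ⁻¹ b.rev)).rev = b.rev.rev
      simp only [Equiv.Perm.inv_def] at this
      simp [this]
    · intro h
      exact absurd (Finset.mem_univ _) h
  rw [hsign, hprod]
  rfl

omit [Algebra ℚ A] in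
lemma alternantL_eq (l : Fin d → ℕ) : alternantL A d l = ∑ σ : Equiv.Perm (Fin d),
    (Equiv.Perm.sign σ : ℤ) • AddMonoidAlgebra.single
      (fun u : Fin d => (l (σ u) : ℤ) + (d : ℤ) - 1 - ((σ u : ℕ) : ℤ)) (1 : A) := by
  classical
  rw [alternantL, Matrix.det_apply]
  refine Finset.sum_congr rfl fun σ _ => ?_
  have hprod : ∏ i : Fin d, (Matrix.of fun i j : Fin d =>
        monoL A (fun u => if u = j then (l i : ℤ) + (d : ℤ) - 1 - (i : ℕ) else 0) (1 : A)) (σ i) i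
      = AddMonoidAlgebra.single
        (fun u : Fin d => (l (σ u) : ℤ) + (d : ℤ) - 1 - ((σ u : ℕ) : ℤ)) (1 : A) := by
    simp only [Matrix.of_apply, monoL]
    rw [AddMonoidAlgebra.prod_single, Finset.prod_const_one]
    congr 1
    funext u
    rw [Finset.sum_apply]
    rw [Finset.sum_eq_single u]
    · simp
    · intro b _ hb
      simp [Ne.symm hb]
    · intro h
      exact absurd (Finset.mem_univ _) h
  rw [hprod]
  rfl

lemma Phi_eq (g : AddMonoidAlgebra A (Fin d → ℤ)) :
    Phi A d g = Lmap A d (vandL A d * g) := by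
  induction g using AddMonoidAlgebra.induction_linear with
  | zero => simp [Phi, Finsupp.sum_zero_index]
  | add f g hf hg =>
      rw [mul_add, map_add, ← hf, ← hg, Phi, Phi, Phi, AddMonoidAlgebra.coeff_add,
        Finsupp.sum_add_index (fun _ _ => smul_zero _) (fun _ _ _ _ => smul_add _ _ _)]
  | single m a =>
      have hphi : Phi A d (AddMonoidAlgebra.single m a) = phiC d m • a :=
        Finsupp.sum_single_index (smul_zero _)
      rw [hphi, vandL_eq, Finset.sum_mul]
      simp only [smul_mul_assoc, AddMonoidAlgebra.single_mul_single, one_mul, map_sum,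
        map_zsmul, Lmap_single]
      rw [phiC, Finset.sum_smul]
      refine Finset.sum_congr rfl fun σ _ => ?_
      have hexp : (∏ i : Fin d, invFact (m i + (d : ℤ) - 1 - ((σ i : ℕ) : ℤ)))
          = ∏ i : Fin d,
              invFact (((fun u : Fin d => (d : ℤ) - 1 - ((σ u : ℕ) : ℤ)) + m) i) := by
        refine Finset.prod_congr rfl fun i _ => ?_
        simp only [Pi.add_apply]
        congr 1
        ring
      rw [mul_smul, Int.cast_smul_eq_zsmul, hexp]

end Aux


/-- For a partition `λ = (λ_1, …, λ_d)` and a symmetric Laurent polynomial `f`,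
`Φ(∏_i t_i^{-i} · f · s_λ(t)) = Φ(∏_i t_i^{-i+λ_{i+1}} · f)`, where the Schur polynomial
`s_λ(t)` is characterized by `Δ(t) · s_λ(t) = det[t_j^{λ_i + d - i}]`. -/
theorem Phi_mul_schur (A : Type*) [CommRing A] [Algebra ℚ A] (d : ℕ)
    (l : Fin d → ℕ) (hl : Antitone l)
    (f S : AddMonoidAlgebra A (Fin d → ℤ))
    (hf : ∀ σ : Equiv.Perm (Fin d), permL σ f = f)
    (hS : vandL A d * S = alternantL A d l) :
    Phi A d (monoL A (fun i : Fin d => -((i : ℕ) : ℤ)) 1 * f * S) =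
      Phi A d (monoL A (fun i : Fin d => -((i : ℕ) : ℤ) + (l i : ℤ)) 1 * f) := by
  classical
  rw [Phi_eq, Phi_eq]
  have key : vandL A d * (monoL A (fun i : Fin d => -((i : ℕ) : ℤ)) 1 * f * S)
      = monoL A (fun i : Fin d => -((i : ℕ) : ℤ)) 1 * f * alternantL A d l := by
    rw [← hS]; ring
  rw [key, alternantL_eq, Finset.mul_sum]
  simp only [mul_smul_comm, map_sum, map_zsmul]
  rw [vandL_eq, Finset.sum_mul]
  simp only [smul_mul_assoc, map_sum, map_zsmul]
  refine Fintype.sum_bijective (fun σ : Equiv.Perm (Fin d) => σ⁻¹)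
    (Function.Involutive.bijective fun σ => inv_inv σ) _ _ fun σ => ?_
  rw [Equiv.Perm.sign_inv]
  congr 1
  rw [← Lmap_permL σ (monoL A (fun i : Fin d => -((i : ℕ) : ℤ)) 1 * f *
        AddMonoidAlgebra.single
          (fun u : Fin d => (l (σ u) : ℤ) + (d : ℤ) - 1 - ((σ u : ℕ) : ℤ)) 1)]
  rw [permL_mul, permL_mul, hf, monoL, permL_single, permL_single]
  rw [mul_right_comm, AddMonoidAlgebra.single_mul_single, one_mul]
  rw [monoL, ← mul_assoc, AddMonoidAlgebra.single_mul_single, one_mul]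
  apply congrArg (Lmap A d)
  apply congrArg (· * f)
  apply congrArg (fun e : Fin d → ℤ => AddMonoidAlgebra.single e (1 : A))
  funext u
  simp only [Pi.add_apply, Function.comp_apply, Equiv.apply_symm_apply]
  have h5 : (σ⁻¹ : Equiv.Perm (Fin d)) u = σ.symm u := rfl
  rw [h5]
  ring
end

section
/- The determinant det[1/(k_i + d - 1 - j)!]_{0 ≤ i,j ≤ d-1} equals (-1)^{d(d-1)/2} · (∏_{0≤i<j≤d-1}(k_i - k_j)) / ∏_i (k_i + d - 1)!, for any nonnegative integers k_0,...,k_{d-1}, with the convention 1/m! = 0 for m < 0. -/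
open Finset

lemma invFact_sub (n j : ℕ) :
    invFact ((n : ℤ) - j) = (Nat.descFactorial n j : ℚ) / (Nat.factorial n : ℚ) := by
  by_cases h : j ≤ n
  · rw [invFact, if_pos (by omega : (0:ℤ) ≤ (n:ℤ) - j)]
    have ht : ((n : ℤ) - j).toNat = n - j := by omega
    rw [ht]
    have h1 : ((n - j).factorial : ℚ) * (Nat.descFactorial n j : ℚ) = (n.factorial : ℚ) := by
      exact_mod_cast congrArg (Nat.cast : ℕ → ℚ) (Nat.factorial_mul_descFactorial h)
    rw [eq_div_iff (by exact_mod_cast n.factorial_ne_zero), ← h1]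
    have h2 : ((n - j).factorial : ℚ) ≠ 0 := by exact_mod_cast (n - j).factorial_ne_zero
    field_simp
  · rw [invFact, if_neg (by omega), Nat.descFactorial_eq_zero_iff_lt.mpr (by omega), Nat.cast_zero,
      zero_div]

lemma prod_neg_aux {α : Type*} (s : Finset α) (f : α → ℚ) :
    ∏ x ∈ s, (-f x) = (-1) ^ s.card * ∏ x ∈ s, f x := by
  rw [← Finset.prod_const, ← Finset.prod_mul_distrib]
  simp

lemma sum_card_Ioi (d : ℕ) : ∑ i : Fin d, (Finset.Ioi i).card = d * (d - 1) / 2 := by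
  simp only [Fin.card_Ioi]
  rw [Fin.sum_univ_eq_sum_range (fun i => d - 1 - i) d]
  rw [show (∑ i ∈ Finset.range d, (d - 1 - i)) = ∑ i ∈ Finset.range d, id (d - 1 - i) from rfl,
    Finset.sum_range_reflect (id : ℕ → ℕ) d]
  simpa using Finset.sum_range_id d

/-- For nonnegative integers `k_0, …, k_{d-1}` one has
`det[1/(k_i + d - 1 - j)!]_{0 ≤ i,j ≤ d-1}
  = (-1)^{d(d-1)/2} · ∏_{i<j}(k_i - k_j) / ∏_i (k_i + d - 1)!`,
with the convention `1/m! = 0` for `m < 0`. -/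
theorem det_inv_factorial_shifted (d : ℕ) (k : Fin d → ℕ) :
    Matrix.det (Matrix.of fun i j : Fin d =>
        invFact ((k i : ℤ) + (d : ℤ) - 1 - (j : ℕ))) =
      (-1) ^ (d * (d - 1) / 2) *
        (∏ p ∈ Finset.univ.filter (fun p : Fin d × Fin d => p.1 < p.2),
          ((k p.1 : ℚ) - (k p.2 : ℚ))) /
        ∏ i : Fin d, ((Nat.factorial (k i + d - 1) : ℕ) : ℚ) := by
  cases d with
  | zero => simp [Matrix.det_isEmpty]
  | succ n =>
    set x : Fin (n + 1) → ℕ := fun i => k i + n with hx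
    have hM : (Matrix.of fun i j : Fin (n + 1) =>
          invFact ((k i : ℤ) + ((n + 1 : ℕ) : ℤ) - 1 - (j : ℕ)))
        = Matrix.of fun i j : Fin (n + 1) =>
            ((Nat.factorial (x i) : ℚ))⁻¹ * (descPochhammer ℚ (j : ℕ)).eval ((x i : ℕ) : ℚ) := by
      ext i j
      have he : (k i : ℤ) + ((n + 1 : ℕ) : ℤ) - 1 - (j : ℕ) = ((x i : ℕ) : ℤ) - (j : ℕ) := by
        simp only [hx]; push_cast; ring
      rw [Matrix.of_apply, Matrix.of_apply, he, invFact_sub,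
        descPochhammer_eval_eq_descFactorial, div_eq_inv_mul]
    rw [hM, Matrix.det_mul_column (fun i => ((Nat.factorial (x i) : ℚ))⁻¹)
      (fun i j : Fin (n + 1) => (descPochhammer ℚ (j : ℕ)).eval ((x i : ℕ) : ℚ))]
    have hof : (Matrix.det fun i j : Fin (n + 1) =>
          (descPochhammer ℚ (j : ℕ)).eval ((x i : ℕ) : ℚ))
        = (Matrix.of fun i j : Fin (n + 1) =>
          (descPochhammer ℚ (j : ℕ)).eval ((x i : ℕ) : ℚ)).det := rfl
    rw [hof]
    rw [← Matrix.det_eval_matrixOfPolynomials_eq_det_vandermonde (fun i => ((x i : ℕ) : ℚ))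
      (fun j => descPochhammer ℚ (j : ℕ))
      (fun j => descPochhammer_natDegree ℚ (j : ℕ))
      (fun j => monic_descPochhammer ℚ (j : ℕ))]
    rw [Matrix.det_vandermonde]
    have hT : (∏ i : Fin (n + 1), ∏ j ∈ Finset.Ioi i, (((x j : ℕ) : ℚ) - ((x i : ℕ) : ℚ)))
        = ∏ i : Fin (n + 1), ∏ j ∈ Finset.Ioi i, ((k j : ℚ) - (k i : ℚ)) := by
      refine Finset.prod_congr rfl fun i _ => Finset.prod_congr rfl fun j _ => ?_
      simp only [hx]; push_cast; ring
    rw [hT]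
    have hP : (∏ p ∈ Finset.univ.filter (fun p : Fin (n + 1) × Fin (n + 1) => p.1 < p.2),
          ((k p.1 : ℚ) - (k p.2 : ℚ)))
        = (-1) ^ ((n + 1) * ((n + 1) - 1) / 2) *
          ∏ i : Fin (n + 1), ∏ j ∈ Finset.Ioi i, ((k j : ℚ) - (k i : ℚ)) := by
      rw [Finset.prod_finset_product' (f := fun i j : Fin (n + 1) => ((k i : ℚ) - (k j : ℚ)))
        (Finset.univ.filter (fun p : Fin (n + 1) × Fin (n + 1) => p.1 < p.2)) Finset.univ
        (fun i => Finset.Ioi i) (by simp [Finset.mem_filter, Finset.mem_Ioi])]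
      have hneg : ∀ i : Fin (n + 1), (∏ j ∈ Finset.Ioi i, ((k i : ℚ) - (k j : ℚ)))
          = (-1) ^ (Finset.Ioi i).card * ∏ j ∈ Finset.Ioi i, ((k j : ℚ) - (k i : ℚ)) := by
        intro i
        rw [← prod_neg_aux]
        exact Finset.prod_congr rfl fun j _ => by ring
      simp_rw [hneg]
      rw [Finset.prod_mul_distrib, Finset.prod_pow_eq_pow_sum, sum_card_Ioi]
    rw [hP]
    have hF : (∏ i : Fin (n + 1), ((Nat.factorial (k i + (n + 1) - 1) : ℕ) : ℚ))
        = ∏ i : Fin (n + 1), ((Nat.factorial (x i) : ℕ) : ℚ) := by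
      refine Finset.prod_congr rfl fun i _ => ?_
      congr 1
    rw [hF]
    have he : ((-1 : ℚ)) ^ ((n + 1) * ((n + 1) - 1) / 2) * (-1) ^ ((n + 1) * ((n + 1) - 1) / 2)
        = 1 := by
      rw [← pow_add]; exact Even.neg_one_pow ⟨_, rfl⟩
    rw [Finset.prod_inv_distrib, ← mul_assoc ((-1 : ℚ) ^ ((n + 1) * ((n + 1) - 1) / 2)), he,
      one_mul, inv_mul_eq_div]
end
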